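/- arXiv:2009.13131 — 2 statements merged into one kernel-verified Lean document; each statement's English description precedes it below -/
import Mathlib

section
/- Let C > 0, 0 < α < 1, and let (x_τ)_{τ∈ℕ} be a sequence of nonnegative reals satisfying x_{τ+1} ≤ C·(max(x_τ, x_{τ+1}))^α + C for all τ. Then there exists a constant M > 0 (depending only on C and α) such that x_τ ≤ M for all τ ≥ 1. -/
theorem stmt5 (C α : ℝ) (hC : 0 < C) (hα0 : 0 < α) (hα1 : α < 1)
    (x : ℕ → ℝ) (hx : ∀ τ, 0 ≤ x τ)
    (hrec : ∀ τ, x (τ + 1) ≤ C * (max (x τ) (x (τ + 1))) ^ α + C) :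
    ∃ M : ℝ, 0 < M ∧ ∀ τ, 1 ≤ τ → x τ ≤ M := by
  have h1α : 0 < 1 - α := by linarith
  set B : ℝ := max 1 (3 * C) with hB
  have hB1 : (1:ℝ) ≤ B := le_max_left _ _
  have hB3C : 3 * C ≤ B := le_max_right _ _
  set M₀ : ℝ := B ^ (1 / (1 - α)) with hM0
  have hexp : (1:ℝ) ≤ 1 / (1 - α) := (le_div_iff₀ h1α).mpr (by linarith)
  have hM01 : (1:ℝ) ≤ M₀ := Real.one_le_rpow hB1 (by positivity)
  have hM0B : B ≤ M₀ := by
    calc B = B ^ (1:ℝ) := (Real.rpow_one B).symm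
    _ ≤ B ^ (1 / (1 - α)) := Real.rpow_le_rpow_of_exponent_le hB1 hexp
  have hM0pow : M₀ ^ (1 - α) = B := by
    rw [hM0, ← Real.rpow_mul (by positivity), one_div, inv_mul_cancel₀ h1α.ne',
      Real.rpow_one]
  -- key: above M₀, the recursion map is strictly contracting
  have key : ∀ t : ℝ, M₀ < t → C * t ^ α + C < t := by
    intro t ht
    have ht0 : (0:ℝ) < t := lt_of_le_of_lt (by linarith) ht
    have htB : B ≤ t ^ (1 - α) := by
      rw [← hM0pow]
      exact Real.rpow_le_rpow (by linarith) ht.le h1α.le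
    have h3 : 3 * C * t ^ α ≤ t := by
      have := mul_le_mul_of_nonneg_right (le_trans hB3C htB)
        (Real.rpow_nonneg ht0.le α)
      calc 3 * C * t ^ α ≤ t ^ (1 - α) * t ^ α := this
        _ = t := by rw [← Real.rpow_add ht0]; norm_num
    have hC3 : 3 * C ≤ t := le_trans hB3C (le_trans hM0B ht.le)
    linarith
  -- induction: x τ ≤ max (x 0) M₀ for all τ
  have hbdd : ∀ τ, x τ ≤ max (x 0) M₀ := by
    intro τ
    induction τ with
    | zero => exact le_max_left _ _
    | succ n ih =>
      have hstep : x (n + 1) ≤ max (x n) M₀ := by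
        by_contra h
        push_neg at h
        have h1 : x n < x (n + 1) := lt_of_le_of_lt (le_max_left _ _) h
        have h2 : M₀ < x (n + 1) := lt_of_le_of_lt (le_max_right _ _) h
        have hmax : max (x n) (x (n + 1)) = x (n + 1) := max_eq_right h1.le
        have := hrec n
        rw [hmax] at this
        exact absurd (lt_of_le_of_lt this (key _ h2)) (lt_irrefl _)
      calc x (n + 1) ≤ max (x n) M₀ := hstep
        _ ≤ max (max (x 0) M₀) M₀ := max_le_max ih le_rfl
        _ = max (x 0) M₀ := by rw [max_assoc, max_self]
  exact ⟨max (x 0) M₀, lt_of_lt_of_le one_pos (le_trans hM01 (le_max_right _ _)),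
    fun τ _ => hbdd τ⟩
end

section
/- Suppose φ : [0,∞) → [0,∞) is differentiable, and there are constants ω > 0, C > 0, κ > 0 and a nonnegative function h : [0,∞) → [0,∞) such that φ'(t) ≤ −ω φ(t) + h(t)·(C φ(t)^{κ/2} − ω) for all t ≥ 0. If φ(0)^{κ/2} < ω/C, then φ(t) ≤ e^{−ωt} φ(0) for all t ≥ 0. -/
theorem stmt14 (φ h : ℝ → ℝ) (ω C κ : ℝ) (hω : 0 < ω) (hC : 0 < C) (hκ : 0 < κ)
    (hφdiff : Differentiable ℝ φ)
    (hφ : ∀ t, 0 ≤ t → 0 ≤ φ t) (hh : ∀ t, 0 ≤ t → 0 ≤ h t)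
    (hineq : ∀ t, 0 ≤ t → deriv φ t ≤ -ω * φ t + h t * (C * φ t ^ (κ / 2) - ω))
    (hsmall : φ 0 ^ (κ / 2) < ω / C) :
    ∀ t, 0 ≤ t → φ t ≤ Real.exp (-ω * t) * φ 0 := by
  set ψ : ℝ → ℝ := fun s => Real.exp (ω * s) * φ s with hψdef
  have hψd : ∀ s, HasDerivAt ψ (Real.exp (ω * s) * (deriv φ s + ω * φ s)) s := by
    intro s
    have h1 : HasDerivAt (fun x : ℝ => Real.exp (ω * x)) (Real.exp (ω * s) * (ω * 1)) s :=
      ((hasDerivAt_id s).const_mul ω).exp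
    have : HasDerivAt ψ (Real.exp (ω * s) * (ω * 1) * φ s + Real.exp (ω * s) * deriv φ s) s :=
      h1.mul (hφdiff s).hasDerivAt
    convert this using 1
    ring
  have key : ∀ t, 0 ≤ t → (∀ s ∈ Set.Ico (0:ℝ) t, φ s ^ (κ / 2) < ω / C) →
      φ t ≤ Real.exp (-ω * t) * φ 0 := by
    intro t ht hlt
    have hanti : AntitoneOn ψ (Set.Icc 0 t) := by
      apply antitoneOn_of_deriv_nonpos (convex_Icc 0 t)
      · exact (Real.continuous_exp.comp (continuous_const.mul continuous_id)).mul
          hφdiff.continuous |>.continuousOn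
      · intro x hx
        exact ((hψd x).differentiableAt).differentiableWithinAt
      · intro x hx
        rw [interior_Icc] at hx
        rw [(hψd x).deriv]
        have hx0 : (0:ℝ) ≤ x := le_of_lt hx.1
        have hbr : C * φ x ^ (κ / 2) - ω ≤ 0 := by
          have := hlt x ⟨hx0, hx.2⟩
          have : C * φ x ^ (κ / 2) < C * (ω / C) := by
            exact mul_lt_mul_of_pos_left this hC
          rw [mul_div_cancel₀ _ (ne_of_gt hC)] at this
          linarith
        have hd : deriv φ x + ω * φ x ≤ 0 := by
          have h1 := hineq x hx0
          have h2 : h x * (C * φ x ^ (κ / 2) - ω) ≤ 0 :=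
            mul_nonpos_of_nonneg_of_nonpos (hh x hx0) hbr
          linarith
        exact mul_nonpos_of_nonneg_of_nonpos (Real.exp_pos _).le hd
    have h0 : ψ t ≤ ψ 0 := hanti (Set.left_mem_Icc.2 ht) (Set.right_mem_Icc.2 ht) ht
    simp only [hψdef, mul_zero, Real.exp_zero, one_mul] at h0
    have hE : Real.exp (ω * t) > 0 := Real.exp_pos _
    rw [neg_mul, Real.exp_neg, inv_mul_eq_div, le_div_iff₀ hE]
    nlinarith
  have hall : ∀ s, 0 ≤ s → φ s ^ (κ / 2) < ω / C := by
    by_contra hcon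
    push_neg at hcon
    obtain ⟨s₀, hs₀, hge⟩ := hcon
    set S : Set ℝ := {s | 0 ≤ s ∧ ω / C ≤ φ s ^ (κ / 2)} with hSdef
    have hSne : S.Nonempty := ⟨s₀, hs₀, hge⟩
    have hScont : Continuous fun s => φ s ^ (κ / 2) :=
      hφdiff.continuous.rpow_const (fun x => Or.inr (by positivity))
    have hSclosed : IsClosed S := by
      have : S = {s | 0 ≤ s} ∩ {s | ω / C ≤ φ s ^ (κ / 2)} := rfl
      rw [this]
      exact (isClosed_le continuous_const continuous_id).inter
        (isClosed_le continuous_const hScont)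
    have hSbdd : BddBelow S := ⟨0, fun x hx => hx.1⟩
    set T := sInf S with hTdef
    have hTmem : T ∈ S := hSclosed.csInf_mem hSne hSbdd
    have hT0 : 0 ≤ T := hTmem.1
    have hTlt : ∀ s ∈ Set.Ico (0:ℝ) T, φ s ^ (κ / 2) < ω / C := by
      intro s hs
      by_contra hc
      push_neg at hc
      have : s ∈ S := ⟨hs.1, hc⟩
      exact absurd (csInf_le hSbdd this) (not_le.2 hs.2)
    have hφT := key T hT0 hTlt
    have hle1 : Real.exp (-ω * T) ≤ 1 := by
      apply Real.exp_le_one_iff.2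
      nlinarith
    have hφT0 : φ T ≤ φ 0 := by
      have := hφ 0 le_rfl
      nlinarith
    have : φ T ^ (κ / 2) ≤ φ 0 ^ (κ / 2) :=
      Real.rpow_le_rpow (hφ T hT0) hφT0 (by positivity)
    have := hTmem.2
    linarith
  intro t ht
  exact key t ht (fun s hs => hall s hs.1)
end
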